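/- Let G be a finite simple graph on n vertices having at least one edge. Then the largest Laplacian eigenvalue satisfies λ_n(G) ≥ d_n(G) + 1, where d_n(G) is the maximum vertex degree of G. -/

import Mathlib

open Matrix Polynomial Finset

/-- Characteristic polynomial is invariant under conjugation. -/
lemma aux_charpoly_conj {n : ℕ} (P Q A : Matrix (Fin n) (Fin n) ℝ)
    (h1 : P * Q = 1) : (P * A * Q).charpoly = A.charpoly := by
  have h2 : Q * P = 1 := mul_eq_one_comm.mp h1
  have key : charmatrix (P * A * Q) =
      P.map (C : ℝ →+* ℝ[X]) * charmatrix A * Q.map (C : ℝ →+* ℝ[X]) := by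
    unfold charmatrix
    have hPQ : P.map (C : ℝ →+* ℝ[X]) * Q.map (C : ℝ →+* ℝ[X]) = 1 := by
      rw [← Matrix.map_mul, h1]
      simp
    have hs : (Matrix.scalar (Fin n)) (X : ℝ[X]) = (X : ℝ[X]) • (1 : Matrix (Fin n) (Fin n) ℝ[X]) := by
      ext i j
      by_cases h : i = j <;>
        simp [Matrix.scalar_apply, Matrix.one_apply, Matrix.diagonal_apply, h]
    rw [mul_sub, sub_mul]
    congr 1
    · rw [hs, Matrix.mul_smul, mul_one, Matrix.smul_mul, hPQ]
    · simp [Matrix.map_mul, RingHom.mapMatrix_apply, mul_assoc]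
  have hdet : ((P * Q).map (C : ℝ →+* ℝ[X])).det = 1 := by rw [h1]; simp
  rw [Matrix.charpoly, key, det_mul, det_mul, Matrix.charpoly]
  rw [Matrix.map_mul, det_mul] at hdet
  rw [mul_right_comm, hdet, one_mul]

lemma aux_charpoly_diagonal {n : ℕ} (v : Fin n → ℝ) :
    (Matrix.diagonal v).charpoly = ∏ i, (X - C (v i)) := by
  rw [Matrix.charpoly]
  have : charmatrix (Matrix.diagonal v) = Matrix.diagonal (fun i => X - C (v i)) := by
    ext i j
    rcases eq_or_ne i j with rfl | h
    · simp [charmatrix_apply_eq]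
    · simp [charmatrix_apply_ne _ _ _ h, Matrix.diagonal_apply_ne _ h]
  rw [this, det_diagonal]

/-- The roots of the characteristic polynomial of a real symmetric matrix are its
eigenvalues. -/
lemma aux_charpoly_roots {n : ℕ} (L : Matrix (Fin n) (Fin n) ℝ) (hL : L.IsHermitian) :
    L.charpoly.roots = Finset.univ.val.map hL.eigenvalues := by
  have hsp := hL.spectral_theorem
  set U := (hL.eigenvectorUnitary : Matrix (Fin n) (Fin n) ℝ) with hUdef
  have hU1 : U * star U = 1 := (Matrix.mem_unitaryGroup_iff).mp hL.eigenvectorUnitary.2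
  have hdiag : Matrix.diagonal (RCLike.ofReal ∘ hL.eigenvalues) =
      Matrix.diagonal hL.eigenvalues := by
    congr 1
  have h1 : L.charpoly = (Matrix.diagonal hL.eigenvalues).charpoly := by
    conv_lhs => rw [hsp, hdiag]
    exact aux_charpoly_conj U (star U) _ hU1
  rw [h1, aux_charpoly_diagonal]
  have : ∏ i, (X - C (hL.eigenvalues i)) =
      ((Finset.univ.val.map hL.eigenvalues).map (fun a : ℝ => X - C a)).prod := by
    rw [Multiset.map_map]
    rfl
  rw [this, roots_multiset_prod_X_sub_C]

/-- Rayleigh quotient bound: the quadratic form is bounded by the largest eigenvalue. -/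
lemma aux_rayleigh {n : ℕ} (L : Matrix (Fin n) (Fin n) ℝ) (hL : L.IsHermitian)
    (M : ℝ) (hM : ∀ i, hL.eigenvalues i ≤ M) (x : Fin n → ℝ) :
    x ⬝ᵥ L *ᵥ x ≤ M * (x ⬝ᵥ x) := by
  set U := (hL.eigenvectorUnitary : Matrix (Fin n) (Fin n) ℝ) with hUdef
  have hU1 : U * star U = 1 := (Matrix.mem_unitaryGroup_iff).mp hL.eigenvectorUnitary.2
  have hstarU : star U = Uᵀ := by
    rw [Matrix.star_eq_conjTranspose, Matrix.conjTranspose_eq_transpose_of_trivial]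
  set y : Fin n → ℝ := star U *ᵥ x with hy
  have hdiag : Matrix.diagonal (RCLike.ofReal ∘ hL.eigenvalues) =
      Matrix.diagonal hL.eigenvalues := by congr 1
  have hxU : x ᵥ* U = y := by rw [hy, hstarU, Matrix.mulVec_transpose]
  have hform : x ⬝ᵥ L *ᵥ x = ∑ i, hL.eigenvalues i * y i ^ 2 := by
    conv_lhs => rw [hL.spectral_theorem, hdiag]
    rw [Unitary.conjStarAlgAut_apply, ← Matrix.mulVec_mulVec, ← Matrix.mulVec_mulVec, Matrix.dotProduct_mulVec, hxU]
    simp only [dotProduct, Matrix.mulVec_diagonal]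
    exact Finset.sum_congr rfl fun i _ => by ring
  have h2 : y ⬝ᵥ y = x ⬝ᵥ x := by
    rw [← hxU, ← Matrix.dotProduct_mulVec, Matrix.mulVec_vecMul, ← hstarU, hU1, Matrix.one_mulVec]
  rw [hform, ← h2]
  calc ∑ i, hL.eigenvalues i * y i ^ 2 ≤ ∑ i, M * y i ^ 2 :=
        Finset.sum_le_sum fun i _ => mul_le_mul_of_nonneg_right (hM i) (sq_nonneg _)
    _ = M * (y ⬝ᵥ y) := by rw [← Finset.mul_sum]; simp [dotProduct, pow_two]

/-- Grone–Merris: if `G` has at least one edge, then `λ_n(G) ≥ d_n(G) + 1`. -/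
theorem lap_spectral_radius_ge_max_degree_add_one (n : ℕ) (hn : 0 < n)
    (G : SimpleGraph (Fin n)) [DecidableRel G.Adj]
    (hedge : ∃ u v : Fin n, G.Adj u v)
    (eigs : Fin n → ℝ) (heigs : Monotone eigs)
    (hroots : (G.lapMatrix ℝ).charpoly.roots = Finset.univ.val.map eigs)
    (d : Fin n → ℕ) (hd : Monotone d)
    (hdeg : Finset.univ.val.map d = Finset.univ.val.map (fun v => G.degree v)) :
    eigs ⟨n - 1, by omega⟩ ≥ (d ⟨n - 1, by omega⟩ : ℝ) + 1 := by
  classical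
  have hL : (G.lapMatrix ℝ).IsHermitian := (SimpleGraph.posSemidef_lapMatrix ℝ G).1
  have hmult : Finset.univ.val.map eigs = Finset.univ.val.map hL.eigenvalues := by
    rw [← hroots, aux_charpoly_roots _ hL]
  set top : Fin n := ⟨n - 1, by omega⟩ with htopdef
  have htople : ∀ j : Fin n, j ≤ top := by
    intro j; rw [Fin.le_def]; have := j.2; simp only [htopdef]; omega
  have hMax : ∀ i, hL.eigenvalues i ≤ eigs top := by
    intro i
    have hmem : hL.eigenvalues i ∈ Finset.univ.val.map eigs := by
      rw [hmult]; exact Multiset.mem_map_of_mem _ (Finset.mem_univ_val i)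
    obtain ⟨j, _, hj⟩ := Multiset.mem_map.mp hmem
    rw [← hj]; exact heigs (htople j)
  obtain ⟨v, hv⟩ : ∃ v : Fin n, G.degree v = d top := by
    have hmem : d top ∈ Finset.univ.val.map (fun v => G.degree v) := by
      rw [← hdeg]; exact Multiset.mem_map_of_mem _ (Finset.mem_univ_val top)
    obtain ⟨v, _, hv⟩ := Multiset.mem_map.mp hmem
    exact ⟨v, hv⟩
  have hdeg1 : 1 ≤ d top := by
    obtain ⟨u, w, huw⟩ := hedge
    have hu : 0 < G.degree u := (G.degree_pos_iff_exists_adj u).2 ⟨w, huw⟩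
    have hmem : G.degree u ∈ Finset.univ.val.map d := by
      rw [hdeg]; exact Multiset.mem_map_of_mem _ (Finset.mem_univ_val u)
    obtain ⟨j, _, hj⟩ := Multiset.mem_map.mp hmem
    calc 1 ≤ G.degree u := hu
      _ = d j := hj.symm
      _ ≤ d top := hd (htople j)
  set c : ℝ := (G.degree v : ℝ) with hc
  set x : Fin n → ℝ := fun u => if u = v then c else if G.Adj v u then -1 else 0 with hx
  have hsum_ind : ∀ t : ℝ, ∑ j, (if G.Adj v j then t else 0) = c * t := by
    intro t
    have h1 : (G.degree v : ℝ) = ∑ j, if G.Adj v j then (1 : ℝ) else 0 :=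
      G.degree_eq_sum_if_adj v
    calc ∑ j, (if G.Adj v j then t else 0)
        = ∑ j, (if G.Adj v j then (1 : ℝ) else 0) * t := by
          refine Finset.sum_congr rfl fun j _ => ?_
          split <;> ring
      _ = (∑ j, if G.Adj v j then (1 : ℝ) else 0) * t := by rw [Finset.sum_mul]
      _ = c * t := by rw [← h1]
  have hxx : x ⬝ᵥ x = c ^ 2 + c := by
    simp only [dotProduct]
    have hterm : ∀ i, x i * x i =
        (if i = v then c ^ 2 else 0) + (if G.Adj v i then (1 : ℝ) else 0) := by
      intro i
      by_cases h : i = v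
      · subst h; simp [hx, G.irrefl, sq]
      · by_cases h2 : G.Adj v i <;> simp [hx, h, h2]
    rw [Finset.sum_congr rfl fun i _ => hterm i, Finset.sum_add_distrib,
      Finset.sum_ite_eq' Finset.univ v fun _ => c ^ 2, if_pos (Finset.mem_univ v),
      hsum_ind 1, mul_one]
  have hfv : ∀ j, (if G.Adj v j then (x v - x j) ^ 2 else 0) =
      (if G.Adj v j then (c + 1) ^ 2 else 0) := by
    intro j
    by_cases h : G.Adj v j
    · have hne : j ≠ v := fun hh => G.irrefl (hh ▸ h)
      simp only [if_pos h, hx, if_neg hne, if_pos h, if_pos rfl]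
      ring
    · simp [h]
  have hfiv : ∀ i, (if G.Adj i v then (x i - x v) ^ 2 else 0) =
      (if G.Adj v i then (c + 1) ^ 2 else 0) := by
    intro i
    by_cases h : G.Adj v i
    · have hne : i ≠ v := fun hh => G.irrefl (hh ▸ h)
      simp only [if_pos h.symm, hx, if_neg hne, if_pos h, if_pos rfl]
      ring
    · have h' : ¬ G.Adj i v := fun hh => h hh.symm
      simp [h, h']
  have hgv : ∑ j, (if G.Adj v j then (x v - x j) ^ 2 else 0) = c * (c + 1) ^ 2 := by
    rw [Finset.sum_congr rfl fun j _ => hfv j, hsum_ind]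
  have hgiv : ∑ i, (if G.Adj i v then (x i - x v) ^ 2 else 0) = c * (c + 1) ^ 2 := by
    rw [Finset.sum_congr rfl fun i _ => hfiv i, hsum_ind]
  have hf0 : ∀ i j : Fin n, (0 : ℝ) ≤ (if G.Adj i j then (x i - x j) ^ 2 else 0) := by
    intro i j; split
    · exact sq_nonneg _
    · exact le_refl 0
  have hS : 2 * (c * (c + 1) ^ 2) ≤
      ∑ i, ∑ j, (if G.Adj i j then (x i - x j) ^ 2 else 0) := by
    have step : ∀ i : Fin n, (if i = v then c * (c + 1) ^ 2 else 0) +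
        (if i = v then 0 else if G.Adj i v then (x i - x v) ^ 2 else 0) ≤
        ∑ j, (if G.Adj i j then (x i - x j) ^ 2 else 0) := by
      intro i
      by_cases h : i = v
      · subst h
        rw [if_pos rfl, if_pos rfl, add_zero]
        exact le_of_eq hgv.symm
      · simp only [if_neg h, zero_add]
        exact Finset.single_le_sum (fun j _ => hf0 i j) (Finset.mem_univ v)
    have hsplit : ∑ i : Fin n, ((if i = v then c * (c + 1) ^ 2 else 0) +
        (if i = v then 0 else if G.Adj i v then (x i - x v) ^ 2 else 0)) =
        2 * (c * (c + 1) ^ 2) := by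
      rw [Finset.sum_add_distrib, Finset.sum_ite_eq' Finset.univ v fun _ => c * (c + 1) ^ 2,
        if_pos (Finset.mem_univ v)]
      have : ∑ i : Fin n, (if i = v then (0 : ℝ) else
          if G.Adj i v then (x i - x v) ^ 2 else 0) =
          ∑ i : Fin n, (if G.Adj i v then (x i - x v) ^ 2 else 0) := by
        refine Finset.sum_congr rfl fun i _ => ?_
        by_cases h : i = v
        · subst h; simp [G.irrefl]
        · rw [if_neg h]
      rw [this, hgiv]; ring
    calc 2 * (c * (c + 1) ^ 2) = _ := hsplit.symm
      _ ≤ _ := Finset.sum_le_sum fun i _ => step i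
  have hq : (c + 1) * (c ^ 2 + c) ≤ x ⬝ᵥ G.lapMatrix ℝ *ᵥ x := by
    have hform := G.lapMatrix_toLinearMap₂' (R := ℝ) x
    rw [Matrix.toLinearMap₂'_apply'] at hform
    rw [hform]
    have heq : (c + 1) * (c ^ 2 + c) = c * (c + 1) ^ 2 := by ring
    rw [heq]
    linarith
  have hr := aux_rayleigh _ hL (eigs top) hMax x
  rw [hxx] at hr
  have hc1 : (1 : ℝ) ≤ c := by
    rw [hc, hv]; exact_mod_cast hdeg1
  have hpos : (0 : ℝ) < c ^ 2 + c := by nlinarith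
  have hfin : c + 1 ≤ eigs top :=
    le_of_mul_le_mul_right (by linarith) hpos
  have hcd : (d top : ℝ) = c := by rw [hc, hv]
  rw [ge_iff_le, hcd]
  exact hfin
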